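/- For the weighted sum completion time over the Case I GMAC region D*, if γ(P₁)/γ(P₁+P₂) ≤ w ≤ 1, then the minimum of w·d₁ + (1−w)·d₂ over D* is attained at d_E = (τ₁/γ(P₁), τ₂/(γ(P₁+P₂)−γ(P₁))). -/

import Mathlib

noncomputable def γ (x : ℝ) : ℝ := Real.logb 2 (1 + x) / 2

theorem gmac_caseI_min_at_dE (P₁ P₂ τ₁ τ₂ w : ℝ)
    (hP₁ : 0 < P₁) (hP₂ : 0 < P₂) (hτ₁ : 0 < τ₁) (hτ₂ : 0 < τ₂)
    (hcase : τ₂ / τ₁ ≤ (γ (P₁ + P₂) - γ P₁) / γ P₁)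
    (hw0 : γ P₁ / γ (P₁ + P₂) ≤ w) (hw1 : w ≤ 1) :
    let D : Set (ℝ × ℝ) := {d | 0 ≤ d.1 ∧ 0 ≤ d.2 ∧
        τ₁ / γ P₁ ≤ d.1 ∧ τ₂ / γ P₂ ≤ d.2 ∧
        τ₁ + τ₂ ≤ γ P₁ * d.1 + (γ (P₁ + P₂) - γ P₁) * d.2}
    let dE : ℝ × ℝ := (τ₁ / γ P₁, τ₂ / (γ (P₁ + P₂) - γ P₁))
    dE ∈ D ∧ ∀ d ∈ D, w * dE.1 + (1 - w) * dE.2 ≤ w * d.1 + (1 - w) * d.2 := by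
  intro D dE
  have ha : 0 < γ P₁ := by
    have := Real.logb_pos (by norm_num : (1:ℝ) < 2) (show (1:ℝ) < 1 + P₁ by linarith)
    unfold γ; linarith
  have hb : 0 < γ (P₁ + P₂) - γ P₁ := by
    have := Real.logb_lt_logb (b := 2) (by norm_num : (1:ℝ) < 2)
      (show (0:ℝ) < 1 + P₁ by linarith) (show 1 + P₁ < 1 + (P₁ + P₂) by linarith)
    unfold γ; linarith
  have hc : 0 < γ P₂ := by
    have := Real.logb_pos (by norm_num : (1:ℝ) < 2) (show (1:ℝ) < 1 + P₂ by linarith)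
    unfold γ; linarith
  have hbc : γ (P₁ + P₂) - γ P₁ ≤ γ P₂ := by
    have hmul : Real.logb 2 ((1 + P₁) * (1 + P₂)) =
        Real.logb 2 (1 + P₁) + Real.logb 2 (1 + P₂) :=
      Real.logb_mul (by positivity) (by positivity)
    have hle : Real.logb 2 (1 + (P₁ + P₂)) ≤ Real.logb 2 ((1 + P₁) * (1 + P₂)) := by
      apply Real.logb_le_logb_of_le (by norm_num : (1:ℝ) < 2) (by positivity)
      nlinarith
    unfold γ; linarith
  set A := γ P₁ with hA
  set B := γ (P₁ + P₂) - γ P₁ with hB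
  have hAB : γ (P₁ + P₂) = A + B := by ring
  have hwA : A ≤ w * (A + B) := by
    rw [hAB] at hw0
    have := (div_le_iff₀ (by linarith)).mp hw0
    linarith
  constructor
  · refine ⟨by positivity, by positivity, le_refl _, ?_, ?_⟩
    · apply div_le_div_of_nonneg_left (le_of_lt hτ₂) hb hbc
    · have h1 : A * (τ₁ / A) = τ₁ := by field_simp
      have h2 : B * (τ₂ / B) = τ₂ := by field_simp
      simp only [hAB]
      rw [show A + B - A = B by ring, h1, h2]
  · rintro ⟨d₁, d₂⟩ ⟨hd1, hd2, hd3, hd4, hd5⟩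
    simp only [hAB] at hd5 ⊢
    rw [show A + B - γ P₁ = B by rw [← hA]; ring] at hd5
    change τ₁ + τ₂ ≤ A * d₁ + B * d₂ at hd5
    change w * (τ₁ / A) + (1 - w) * (τ₂ / B) ≤ w * d₁ + (1 - w) * d₂
    have h1 : τ₁ ≤ A * d₁ := (div_le_iff₀' ha).mp hd3
    have hw' : 0 ≤ 1 - w := by linarith
    have key : w * τ₁ * B + (1 - w) * τ₂ * A ≤ A * B * (w * d₁ + (1 - w) * d₂) := by
      nlinarith [mul_nonneg (mul_nonneg hw' ha.le) (sub_nonneg.mpr hd5),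
        mul_nonneg (sub_nonneg.mpr h1) (by linarith : (0:ℝ) ≤ w * (A + B) - A)]
    have : w * (τ₁ / A) + (1 - w) * (τ₂ / B) ≤ w * d₁ + (1 - w) * d₂ := by
      rw [show w * (τ₁ / A) + (1 - w) * (τ₂ / B) = (w * τ₁ * B + (1 - w) * τ₂ * A) / (A * B) by
        field_simp, div_le_iff₀ (by positivity)]
      nlinarith [key]
    simpa using this
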